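/- arXiv:math/0510218 — 3 statements merged into one kernel-verified Lean document; each statement's English description precedes it below -/
import Mathlib

section
/- Let F = MonoidAlgebra ℚ (FreeMonoid ℕ) with the three bilinear operations ≺, ∘, ≻ defined on basis words by Loday–Ronco's max-letter rule. Then for all x, y, z ∈ F, (x ≺ y) ≺ z = x ≺ (y ≺ z + y ∘ z + y ≻ z). -/
/-- The right operation `≻` of the Loday–Ronco dendriform trialgebra structure on
noncommutative polynomials: on basis words, `u ≻ v = uv` if `u, v` are nonempty and
`max u < max v`, and `0` otherwise; extended bilinearly. -/
noncomputable def trSucc {α : Type*} [LinearOrder α]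
    (x y : MonoidAlgebra ℚ (FreeMonoid α)) : MonoidAlgebra ℚ (FreeMonoid α) :=
  x.coeff.sum fun u a => y.coeff.sum fun v b =>
    if u.toList ≠ [] ∧ v.toList ≠ [] ∧ u.toList.maximum < v.toList.maximum
    then MonoidAlgebra.single (u * v) (a * b) else 0

/-- The middle operation `∘`: on basis words, `u ∘ v = uv` if `u, v` are nonempty and
`max u = max v`, and `0` otherwise; extended bilinearly. -/
noncomputable def trCirc {α : Type*} [LinearOrder α]
    (x y : MonoidAlgebra ℚ (FreeMonoid α)) : MonoidAlgebra ℚ (FreeMonoid α) :=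
  x.coeff.sum fun u a => y.coeff.sum fun v b =>
    if u.toList ≠ [] ∧ v.toList ≠ [] ∧ u.toList.maximum = v.toList.maximum
    then MonoidAlgebra.single (u * v) (a * b) else 0

/-- The left operation `≺`: on basis words, `u ≺ v = uv` if `u, v` are nonempty and
`max u > max v`, and `0` otherwise; extended bilinearly. -/
noncomputable def trPrec {α : Type*} [LinearOrder α]
    (x y : MonoidAlgebra ℚ (FreeMonoid α)) : MonoidAlgebra ℚ (FreeMonoid α) :=
  x.coeff.sum fun u a => y.coeff.sum fun v b =>
    if u.toList ≠ [] ∧ v.toList ≠ [] ∧ v.toList.maximum < u.toList.maximum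
    then MonoidAlgebra.single (u * v) (a * b) else 0


section Aux
open MonoidAlgebra
variable {α : Type*} [LinearOrder α]

lemma maximum_append' (l₁ l₂ : List α) :
    (l₁ ++ l₂).maximum = max l₁.maximum l₂.maximum := by
  induction l₁ with
  | nil => simp
  | cons a t ih => simp [List.maximum_cons, ih, max_assoc]

lemma trPrec_zero_left (y) : trPrec (α := α) 0 y = 0 := by
  unfold trPrec; exact Finsupp.sum_zero_index

lemma trPrec_zero_right (x) : trPrec (α := α) x 0 = 0 := by
  unfold trPrec; simp [Finsupp.sum_zero_index]

lemma trCirc_zero_right (x) : trCirc (α := α) x 0 = 0 := by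
  unfold trCirc; simp [Finsupp.sum_zero_index]

lemma trSucc_zero_right (x) : trSucc (α := α) x 0 = 0 := by
  unfold trSucc; simp [Finsupp.sum_zero_index]

lemma trPrec_add_left (x x' y) : trPrec (α := α) (x + x') y = trPrec x y + trPrec x' y := by
  unfold trPrec
  rw [MonoidAlgebra.coeff_add, Finsupp.sum_add_index']
  · intro u
    refine Finset.sum_eq_zero fun v _ => ?_
    simp only []
    split_ifs <;> simp
  · intro u a a'
    rw [← Finsupp.sum_add]
    congr 1; funext v b
    split_ifs <;> simp [add_mul, MonoidAlgebra.single_add]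

lemma trPrec_add_right (x y y') : trPrec (α := α) x (y + y') = trPrec x y + trPrec x y' := by
  unfold trPrec
  rw [← Finsupp.sum_add]
  congr 1; funext u a
  rw [MonoidAlgebra.coeff_add, Finsupp.sum_add_index']
  · intro v; split_ifs <;> simp
  · intro v b b'
    split_ifs <;> simp [mul_add, MonoidAlgebra.single_add]

lemma trCirc_add_left (x x' y) : trCirc (α := α) (x + x') y = trCirc x y + trCirc x' y := by
  unfold trCirc
  rw [MonoidAlgebra.coeff_add, Finsupp.sum_add_index']
  · intro u
    refine Finset.sum_eq_zero fun v _ => ?_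
    simp only []
    split_ifs <;> simp
  · intro u a a'
    rw [← Finsupp.sum_add]
    congr 1; funext v b
    split_ifs <;> simp [add_mul, MonoidAlgebra.single_add]

lemma trCirc_add_right (x y y') : trCirc (α := α) x (y + y') = trCirc x y + trCirc x y' := by
  unfold trCirc
  rw [← Finsupp.sum_add]
  congr 1; funext u a
  rw [MonoidAlgebra.coeff_add, Finsupp.sum_add_index']
  · intro v; split_ifs <;> simp
  · intro v b b'
    split_ifs <;> simp [mul_add, MonoidAlgebra.single_add]

lemma trSucc_add_left (x x' y) : trSucc (α := α) (x + x') y = trSucc x y + trSucc x' y := by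
  unfold trSucc
  rw [MonoidAlgebra.coeff_add, Finsupp.sum_add_index']
  · intro u
    refine Finset.sum_eq_zero fun v _ => ?_
    simp only []
    split_ifs <;> simp
  · intro u a a'
    rw [← Finsupp.sum_add]
    congr 1; funext v b
    split_ifs <;> simp [add_mul, MonoidAlgebra.single_add]

lemma trSucc_add_right (x y y') : trSucc (α := α) x (y + y') = trSucc x y + trSucc x y' := by
  unfold trSucc
  rw [← Finsupp.sum_add]
  congr 1; funext u a
  rw [MonoidAlgebra.coeff_add, Finsupp.sum_add_index']
  · intro v; split_ifs <;> simp
  · intro v b b'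
    split_ifs <;> simp [mul_add, MonoidAlgebra.single_add]

lemma trPrec_single_single (u v : FreeMonoid α) (a b : ℚ) :
    trPrec (MonoidAlgebra.single u a) (MonoidAlgebra.single v b) =
      if u.toList ≠ [] ∧ v.toList ≠ [] ∧ v.toList.maximum < u.toList.maximum
      then MonoidAlgebra.single (u * v) (a * b) else 0 := by
  unfold trPrec
  rw [MonoidAlgebra.coeff_single, MonoidAlgebra.coeff_single, Finsupp.sum_single_index, Finsupp.sum_single_index]
  · split_ifs <;> simp
  · simp [Finsupp.sum_single_index]

lemma trCirc_single_single (u v : FreeMonoid α) (a b : ℚ) :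
    trCirc (MonoidAlgebra.single u a) (MonoidAlgebra.single v b) =
      if u.toList ≠ [] ∧ v.toList ≠ [] ∧ u.toList.maximum = v.toList.maximum
      then MonoidAlgebra.single (u * v) (a * b) else 0 := by
  unfold trCirc
  rw [MonoidAlgebra.coeff_single, MonoidAlgebra.coeff_single, Finsupp.sum_single_index, Finsupp.sum_single_index]
  · split_ifs <;> simp
  · simp [Finsupp.sum_single_index]

lemma trSucc_single_single (u v : FreeMonoid α) (a b : ℚ) :
    trSucc (MonoidAlgebra.single u a) (MonoidAlgebra.single v b) =
      if u.toList ≠ [] ∧ v.toList ≠ [] ∧ u.toList.maximum < v.toList.maximum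
      then MonoidAlgebra.single (u * v) (a * b) else 0 := by
  unfold trSucc
  rw [MonoidAlgebra.coeff_single, MonoidAlgebra.coeff_single, Finsupp.sum_single_index, Finsupp.sum_single_index]
  · split_ifs <;> simp
  · simp [Finsupp.sum_single_index]

lemma key (u v w : FreeMonoid α) (a b c : ℚ) :
    trPrec (trPrec (MonoidAlgebra.single u a) (MonoidAlgebra.single v b)) (MonoidAlgebra.single w c)
      = trPrec (MonoidAlgebra.single u a)
          (trPrec (MonoidAlgebra.single v b) (MonoidAlgebra.single w c)
            + trCirc (MonoidAlgebra.single v b) (MonoidAlgebra.single w c)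
            + trSucc (MonoidAlgebra.single v b) (MonoidAlgebra.single w c)) := by
  rw [trPrec_single_single, trPrec_single_single, trCirc_single_single, trSucc_single_single]
  by_cases hv : v.toList = []
  · rw [if_neg (fun hh => absurd hv hh.2.1),
      if_neg (fun hh : v.toList ≠ [] ∧ w.toList ≠ [] ∧ w.toList.maximum < v.toList.maximum =>
        absurd hv hh.1),
      if_neg (fun hh : v.toList ≠ [] ∧ w.toList ≠ [] ∧ v.toList.maximum = w.toList.maximum =>
        absurd hv hh.1),
      if_neg (fun hh : v.toList ≠ [] ∧ w.toList ≠ [] ∧ v.toList.maximum < w.toList.maximum =>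
        absurd hv hh.1)]
    simp [trPrec_zero_left, trPrec_zero_right]
  by_cases hw : w.toList = []
  · rw [if_neg (fun hh : v.toList ≠ [] ∧ w.toList ≠ [] ∧ w.toList.maximum < v.toList.maximum =>
        absurd hw hh.2.1),
      if_neg (fun hh : v.toList ≠ [] ∧ w.toList ≠ [] ∧ v.toList.maximum = w.toList.maximum =>
        absurd hw hh.2.1),
      if_neg (fun hh : v.toList ≠ [] ∧ w.toList ≠ [] ∧ v.toList.maximum < w.toList.maximum =>
        absurd hw hh.2.1)]
    simp only [add_zero]
    rw [trPrec_zero_right]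
    split_ifs with h
    · rw [trPrec_single_single, if_neg (fun hh => absurd hw hh.2.1)]
    · rw [trPrec_zero_left]
  have hvw : (v * w).toList ≠ [] := by
    simp [FreeMonoid.toList_mul, hv]
  have hS : (if v.toList ≠ [] ∧ w.toList ≠ [] ∧ w.toList.maximum < v.toList.maximum
        then MonoidAlgebra.single (v * w) (b * c) else 0)
      + (if v.toList ≠ [] ∧ w.toList ≠ [] ∧ v.toList.maximum = w.toList.maximum
        then MonoidAlgebra.single (v * w) (b * c) else 0)
      + (if v.toList ≠ [] ∧ w.toList ≠ [] ∧ v.toList.maximum < w.toList.maximum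
        then MonoidAlgebra.single (v * w) (b * c) else 0)
      = MonoidAlgebra.single (v * w) (b * c) := by
    rcases lt_trichotomy v.toList.maximum w.toList.maximum with h | h | h
    · rw [if_neg (fun hh => absurd hh.2.2 (not_lt.mpr h.le)),
        if_neg (fun hh => absurd hh.2.2 h.ne), if_pos ⟨hv, hw, h⟩]
      simp
    · rw [if_neg (fun hh => absurd hh.2.2 (not_lt.mpr h.le)),
        if_pos ⟨hv, hw, h⟩, if_neg (fun hh => absurd hh.2.2 (not_lt.mpr h.ge))]
      simp
    · rw [if_pos ⟨hv, hw, h⟩, if_neg (fun hh => absurd hh.2.2 h.ne'),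
        if_neg (fun hh => absurd hh.2.2 (not_lt.mpr h.le))]
      simp
  rw [hS]
  by_cases h1 : u.toList ≠ [] ∧ v.toList ≠ [] ∧ v.toList.maximum < u.toList.maximum
  · rw [if_pos h1, trPrec_single_single, trPrec_single_single]
    have hmax : (u * v).toList.maximum = u.toList.maximum := by
      rw [FreeMonoid.toList_mul, maximum_append', max_eq_left h1.2.2.le]
    have h2 : ((u * v).toList ≠ [] ∧ w.toList ≠ [] ∧ w.toList.maximum < (u * v).toList.maximum)
        ↔ (u.toList ≠ [] ∧ (v * w).toList ≠ [] ∧ (v * w).toList.maximum < u.toList.maximum) := by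
      rw [hmax, FreeMonoid.toList_mul v w, maximum_append']
      constructor
      · rintro ⟨-, -, h⟩; exact ⟨h1.1, hvw, max_lt h1.2.2 h⟩
      · rintro ⟨-, -, h⟩
        refine ⟨by simp [FreeMonoid.toList_mul, h1.1], hw, (le_max_right _ _).trans_lt h⟩
    rw [mul_assoc u v w, mul_assoc a b c, if_congr h2 rfl rfl]
  · rw [if_neg h1, trPrec_zero_left, trPrec_single_single, if_neg]
    rintro ⟨hu, -, hlt⟩
    rw [FreeMonoid.toList_mul, maximum_append'] at hlt
    exact h1 ⟨hu, hv, (le_max_left _ _).trans_lt hlt⟩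

lemma regroup {M : Type*} [AddCommMonoid M] (a b c d e f : M) :
    (a + b + c) + (d + e + f) = (a + d) + (b + e) + (c + f) := by abel

end Aux


lemma trCirc_zero_left {α : Type*} [LinearOrder α] (y) : trCirc (α := α) 0 y = 0 := by
  unfold trCirc; exact Finsupp.sum_zero_index
lemma trSucc_zero_left {α : Type*} [LinearOrder α] (y) : trSucc (α := α) 0 y = 0 := by
  unfold trSucc; exact Finsupp.sum_zero_index

/-- Dendriform trialgebra axiom: `(x ≺ y) ≺ z = x ≺ (y ≺ z + y ∘ z + y ≻ z)`. -/
theorem prec_prec (x y z : MonoidAlgebra ℚ (FreeMonoid ℕ)) :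
    trPrec (trPrec x y) z = trPrec x (trPrec y z + trCirc y z + trSucc y z) := by
  induction x using MonoidAlgebra.induction_linear with
  | zero => simp [trPrec_zero_left]
  | add f g hf hg =>
      rw [trPrec_add_left, trPrec_add_left, trPrec_add_left, hf, hg]
  | single u a =>
  induction y using MonoidAlgebra.induction_linear with
  | zero =>
      simp only [trPrec_zero_right, trPrec_zero_left, trCirc_zero_left, trSucc_zero_left,
        add_zero, zero_add, trPrec_zero_right]
  | add f g hf hg =>
      rw [trPrec_add_right, trPrec_add_left, hf, hg,
        trPrec_add_left, trCirc_add_left, trSucc_add_left, ← trPrec_add_right, regroup]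
  | single v b =>
  induction z using MonoidAlgebra.induction_linear with
  | zero =>
      simp only [trPrec_zero_right, trCirc_zero_right, trSucc_zero_right, add_zero,
        trPrec_zero_right]
  | add f g hf hg =>
      rw [trPrec_add_right, hf, hg,
        trPrec_add_right (y := f), trCirc_add_right, trSucc_add_right, ← trPrec_add_right, regroup]
  | single w c => exact key u v w a b c
end

section
/- Let F = MonoidAlgebra ℚ (FreeMonoid ℕ) with the three bilinear operations ≺, ∘, ≻ defined on basis words by Loday–Ronco's max-letter rule. Then for all x, y, z ∈ F, (x ∘ y) ≺ z = x ∘ (y ≺ z). -/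
section Aux
open Finsupp
variable {α : Type*} [LinearOrder α]

noncomputable def trOp (P : FreeMonoid α → FreeMonoid α → Prop)
    [∀ u v, Decidable (P u v)]
    (x y : MonoidAlgebra ℚ (FreeMonoid α)) : MonoidAlgebra ℚ (FreeMonoid α) :=
  x.coeff.sum fun u a => y.coeff.sum fun v b =>
    if P u v then MonoidAlgebra.single (u * v) (a * b) else 0

variable (P : FreeMonoid α → FreeMonoid α → Prop) [∀ u v, Decidable (P u v)]

omit [LinearOrder α] in
lemma trOp_zero_left (y : MonoidAlgebra ℚ (FreeMonoid α)) : trOp P 0 y = 0 := by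
  simp [trOp]

omit [LinearOrder α] in
lemma trOp_zero_right (x : MonoidAlgebra ℚ (FreeMonoid α)) : trOp P x 0 = 0 := by
  simp [trOp, Finsupp.sum]

omit [LinearOrder α] in
lemma trOp_add_left (x x' y : MonoidAlgebra ℚ (FreeMonoid α)) :
    trOp P (x + x') y = trOp P x y + trOp P x' y := by
  classical
  unfold trOp
  rw [MonoidAlgebra.coeff_add, Finsupp.sum_add_index]
  · intro u _
    simp [Finsupp.sum]
  · intro u _ a a'
    rw [← Finsupp.sum_add]
    refine Finsupp.sum_congr fun v _ => ?_
    split <;> simp [add_mul, Finsupp.single_add]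

omit [LinearOrder α] in
lemma trOp_add_right (x y y' : MonoidAlgebra ℚ (FreeMonoid α)) :
    trOp P x (y + y') = trOp P x y + trOp P x y' := by
  classical
  unfold trOp
  rw [← Finsupp.sum_add]
  refine Finsupp.sum_congr fun u _ => ?_
  rw [MonoidAlgebra.coeff_add, Finsupp.sum_add_index]
  · intro v _
    split <;> simp
  · intro v _ b b'
    split <;> simp [mul_add, Finsupp.single_add]

omit [LinearOrder α] in
lemma trOp_sum_left {ι : Type*} {M : Type*} [AddCommMonoid M] (s : ι →₀ M)
    (f : ι → M → MonoidAlgebra ℚ (FreeMonoid α)) (y : MonoidAlgebra ℚ (FreeMonoid α)) :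
    trOp P (s.sum f) y = s.sum fun i c => trOp P (f i c) y :=
  map_finsuppSum (AddMonoidHom.mk' (fun x => trOp P x y)
    (fun a b => trOp_add_left P a b y)) s f

omit [LinearOrder α] in
lemma trOp_sum_right {ι : Type*} {M : Type*} [AddCommMonoid M] (s : ι →₀ M)
    (f : ι → M → MonoidAlgebra ℚ (FreeMonoid α)) (x : MonoidAlgebra ℚ (FreeMonoid α)) :
    trOp P x (s.sum f) = s.sum fun i c => trOp P x (f i c) :=
  map_finsuppSum (AddMonoidHom.mk' (fun y => trOp P x y)
    (fun a b => trOp_add_right P x a b)) s f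

omit [LinearOrder α] in
lemma trOp_single_left (u : FreeMonoid α) (a : ℚ) (y : MonoidAlgebra ℚ (FreeMonoid α)) :
    trOp P (MonoidAlgebra.single u a) y =
      y.coeff.sum fun v b => if P u v then MonoidAlgebra.single (u * v) (a * b) else 0 := by
  unfold trOp
  rw [MonoidAlgebra.coeff_single, Finsupp.sum_single_index]
  simp only [Finsupp.sum]
  exact Finset.sum_eq_zero fun v _ => by split <;> simp

omit [LinearOrder α] in
lemma trOp_single_right (v : FreeMonoid α) (b : ℚ) (x : MonoidAlgebra ℚ (FreeMonoid α)) :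
    trOp P x (MonoidAlgebra.single v b) =
      x.coeff.sum fun u a => if P u v then MonoidAlgebra.single (u * v) (a * b) else 0 := by
  unfold trOp
  refine Finsupp.sum_congr fun u _ => ?_
  rw [MonoidAlgebra.coeff_single, Finsupp.sum_single_index]
  split <;> simp

lemma maximum_append (l l' : List α) :
    (l ++ l').maximum = max l.maximum l'.maximum := by
  induction l with
  | nil => simp [List.maximum_nil, max_eq_right bot_le]
  | cons a t ih => rw [List.cons_append, List.maximum_cons, List.maximum_cons, ih, max_assoc]

omit [LinearOrder α] in
lemma if_trOp_sum {c : Prop} [Decidable c] (z : MonoidAlgebra ℚ (FreeMonoid α))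
    (f : FreeMonoid α → ℚ → MonoidAlgebra ℚ (FreeMonoid α)) :
    (if c then z.coeff.sum f else 0) = z.coeff.sum fun w d => if c then f w d else 0 := by
  split
  · rfl
  · simp [Finsupp.sum, *]

end Aux
/-- Dendriform trialgebra axiom: `(x ∘ y) ≺ z = x ∘ (y ≺ z)`. -/
theorem circ_prec (x y z : MonoidAlgebra ℚ (FreeMonoid ℕ)) :
    trPrec (trCirc x y) z = trCirc x (trPrec y z) := by
  set Q : FreeMonoid ℕ → FreeMonoid ℕ → Prop := fun u v =>
    u.toList ≠ [] ∧ v.toList ≠ [] ∧ u.toList.maximum = v.toList.maximum with hQ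
  set P : FreeMonoid ℕ → FreeMonoid ℕ → Prop := fun u v =>
    u.toList ≠ [] ∧ v.toList ≠ [] ∧ v.toList.maximum < u.toList.maximum with hP
  have hcirc : trCirc (α := ℕ) = trOp Q := rfl
  have hprec : trPrec (α := ℕ) = trOp P := rfl
  rw [hcirc, hprec]
  have key : ∀ u v w : FreeMonoid ℕ, (Q u v ∧ P (u * v) w) ↔ (P v w ∧ Q u (v * w)) := by
    intro u v w
    simp only [hQ, hP, FreeMonoid.toList_mul, maximum_append, ne_eq, List.append_eq_nil_iff]
    constructor
    · rintro ⟨⟨hu, hv, he⟩, -, hw, hlt⟩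
      rw [he, max_self] at hlt
      exact ⟨⟨hv, hw, hlt⟩, hu, by tauto, by rw [he, max_eq_left hlt.le]⟩
    · rintro ⟨⟨hv, hw, hlt⟩, hu, -, he⟩
      rw [max_eq_left hlt.le] at he
      exact ⟨⟨hu, hv, he⟩, by tauto, hw, by rw [he, max_self]; exact hlt⟩
  have L : trOp P (trOp Q x y) z = Finsupp.sum x.coeff fun u a => Finsupp.sum y.coeff fun v b =>
      Finsupp.sum z.coeff fun w c =>
        if Q u v ∧ P (u * v) w then MonoidAlgebra.single (u * v * w) (a * b * c) else 0 := by
    rw [show trOp Q x y = Finsupp.sum x.coeff fun u a => Finsupp.sum y.coeff fun v b =>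
        if Q u v then MonoidAlgebra.single (u * v) (a * b) else 0 from rfl, trOp_sum_left]
    refine Finsupp.sum_congr fun u _ => ?_
    rw [trOp_sum_left]
    refine Finsupp.sum_congr fun v _ => ?_
    by_cases hq : Q u v
    · rw [if_pos hq, trOp_single_left]
      refine Finsupp.sum_congr fun w _ => ?_
      simp only [and_iff_right hq]
    · rw [if_neg hq, trOp_zero_left]
      symm
      simp only [Finsupp.sum]
      exact Finset.sum_eq_zero fun w _ => by simp [hq]
  have R : trOp Q x (trOp P y z) = Finsupp.sum y.coeff fun v b => Finsupp.sum z.coeff fun w c =>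
      Finsupp.sum x.coeff fun u a =>
        if P v w ∧ Q u (v * w) then MonoidAlgebra.single (u * (v * w)) (a * (b * c)) else 0 := by
    rw [show trOp P y z = Finsupp.sum y.coeff fun v b => Finsupp.sum z.coeff fun w c =>
        if P v w then MonoidAlgebra.single (v * w) (b * c) else 0 from rfl, trOp_sum_right]
    refine Finsupp.sum_congr fun v _ => ?_
    rw [trOp_sum_right]
    refine Finsupp.sum_congr fun w _ => ?_
    by_cases hp : P v w
    · rw [if_pos hp, trOp_single_right]
      refine Finsupp.sum_congr fun u _ => ?_
      simp only [and_iff_right hp]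
    · rw [if_neg hp, trOp_zero_right]
      symm
      simp only [Finsupp.sum]
      exact Finset.sum_eq_zero fun u _ => by simp [hp]
  rw [L, R]
  trans (Finsupp.sum x.coeff fun u a => Finsupp.sum y.coeff fun v b => Finsupp.sum z.coeff fun w c =>
    if P v w ∧ Q u (v * w) then MonoidAlgebra.single (u * (v * w)) (a * (b * c)) else 0)
  · refine Finsupp.sum_congr fun u _ => ?_
    refine Finsupp.sum_congr fun v _ => ?_
    refine Finsupp.sum_congr fun w _ => ?_
    exact if_congr (key u v w) (by rw [mul_assoc, mul_assoc]) rfl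
  · exact (Finsupp.sum_comm x.coeff y.coeff fun u a v b => Finsupp.sum z.coeff fun w c =>
        if P v w ∧ Q u (v * w) then MonoidAlgebra.single (u * (v * w)) (a * (b * c)) else 0).trans
      (Finsupp.sum_congr (g2 := fun v b => Finsupp.sum z.coeff fun w c => Finsupp.sum x.coeff fun u a =>
          if P v w ∧ Q u (v * w) then MonoidAlgebra.single (u * (v * w)) (a * (b * c)) else 0)
        fun v _ => Finsupp.sum_comm x.coeff z.coeff fun u a w c =>
        if P v w ∧ Q u (v * w) then MonoidAlgebra.single (u * (v * w)) (a * (y.coeff v * c)) else 0)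
end

section
/- For every packed word u of length n, the set of parking functions a of length n with pack(a) = u is nonempty (it contains u itself), and it possesses a greatest element for the lexicographic order on words (the maximal unpacking detass(u) of u). -/
/-- The rank of the letter `x` in the word `w`: one plus the number of distinct letters
of `w` smaller than `x`. -/
def rank (w : List ℕ) (x : ℕ) : ℕ := ((w.filter (· < x)).dedup).length + 1

/-- The packed word of a word `w`: if the distinct letters occurring in `w` are
`b₁ < b₂ < … < b_k`, each occurrence of `b_j` is replaced by `j`. -/
def pack (w : List ℕ) : List ℕ := w.map (rank w)

/-- A parking function is a word `a = a₁ a₂ ⋯ a_n` over the positive integers such that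
for every `i` with `1 ≤ i ≤ n`, the number of indices `j` with `a_j ≤ i` is at least
`i`. -/
def IsParkingFun (a : List ℕ) : Prop :=
  (∀ x ∈ a, 0 < x) ∧
  ∀ i : ℕ, 1 ≤ i → i ≤ a.length → i ≤ (a.filter (fun x => x ≤ i)).length

lemma rank_eq_card (w : List ℕ) (x : ℕ) :
    rank w x = (w.toFinset.filter (· < x)).card + 1 := by
  rw [rank, ← List.card_toFinset]
  congr 2
  ext y
  simp [List.mem_filter, and_comm]

lemma rank_mono (w : List ℕ) {x y : ℕ} (h : x ≤ y) : rank w x ≤ rank w y := by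
  rw [rank_eq_card, rank_eq_card]
  have hs : w.toFinset.filter (· < x) ⊆ w.toFinset.filter (· < y) := by
    intro z hz
    simp only [Finset.mem_filter] at hz ⊢
    exact ⟨hz.1, lt_of_lt_of_le hz.2 h⟩
  have := Finset.card_le_card hs
  omega

lemma rank_strict (w : List ℕ) {x y : ℕ} (hx : x ∈ w) (h : x < y) :
    rank w x < rank w y := by
  rw [rank_eq_card, rank_eq_card]
  have hs : w.toFinset.filter (· < x) ⊂ w.toFinset.filter (· < y) := by
    constructor
    · intro z hz
      simp only [Finset.mem_filter] at hz ⊢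
      exact ⟨hz.1, lt_trans hz.2 h⟩
    · intro hcon
      have : x ∈ w.toFinset.filter (· < y) := by
        simp only [Finset.mem_filter, List.mem_toFinset]
        exact ⟨hx, h⟩
      have := hcon this
      simp only [Finset.mem_filter] at this
      omega
  have := Finset.card_lt_card hs
  omega

lemma rank_lt_iff (w : List ℕ) {z x : ℕ} (hz : z ∈ w) :
    rank w z < rank w x ↔ z < x := by
  constructor
  · intro h
    by_contra hc
    push_neg at hc
    exact absurd (rank_mono w hc) (by omega)
  · exact rank_strict w hz

lemma countP_lt_countP (u : List ℕ) {x y : ℕ} (hy : y ∈ u) (hxy : y < x) :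
    u.countP (· < y) < u.countP (· < x) := by
  induction u with
  | nil => simp at hy
  | cons a l ih =>
    have htail : l.countP (· < y) ≤ l.countP (· < x) :=
      List.countP_mono_left (fun z _ h => by
        simp only [decide_eq_true_eq] at h ⊢; omega)
    rw [List.countP_cons, List.countP_cons]
    rcases List.mem_cons.1 hy with rfl | hyl
    · simp only [decide_eq_true_eq, Nat.lt_irrefl, decide_false, hxy, decide_true,
        if_true, if_false]
      simp [Nat.lt_irrefl, hxy]
      omega
    · have := ih hyl
      have hhead : (if (decide (a < y)) = true then 1 else 0) ≤
          (if (decide (a < x)) = true then 1 else 0) := by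
        split_ifs with h1 h2 <;> simp_all <;> omega
      omega

lemma parking_of_bound (b : List ℕ) (hpos : ∀ x ∈ b, 0 < x)
    (h : ∀ x ∈ b, x ≤ b.countP (· < x) + 1) : IsParkingFun b := by
  refine ⟨hpos, fun i hi1 hin => ?_⟩
  rw [← List.countP_eq_length_filter]
  by_cases hall : ∀ x ∈ b, x ≤ i
  · have : b.countP (fun x => x ≤ i) = b.length :=
      List.countP_eq_length.2 (fun a ha => by simpa using hall a ha)
    omega
  · push_neg at hall
    obtain ⟨w0, hw0, hw0i⟩ := hall
    have hs : (b.toFinset.filter (fun y => i < y)).Nonempty :=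
      ⟨w0, by simp [hw0, hw0i]⟩
    set x := (b.toFinset.filter (fun y => i < y)).min' hs with hxdef
    have hxs := Finset.min'_mem _ hs
    rw [← hxdef] at hxs
    simp only [Finset.mem_filter, List.mem_toFinset] at hxs
    obtain ⟨hxb, hix⟩ := hxs
    have hb := h x hxb
    have h2 : b.countP (· < x) ≤ b.countP (fun z => z ≤ i) := by
      apply List.countP_mono_left
      intro z hz hzx
      simp only [decide_eq_true_eq] at hzx ⊢
      by_contra hiz
      push_neg at hiz
      have : x ≤ z := Finset.min'_le _ z (by simp [hz, hiz])
      omega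
    omega

lemma bound_of_parking (b : List ℕ) (hb : IsParkingFun b) :
    ∀ x ∈ b, x ≤ b.countP (· < x) + 1 := by
  intro x hx
  obtain ⟨hpos, hpark⟩ := hb
  rcases Nat.lt_or_ge x 2 with h1 | h2
  · omega
  · have hxlen : x - 1 ≤ b.length := by
      by_contra hgt
      push_neg at hgt
      have hn1 : 0 < b.length := List.length_pos_of_mem hx
      have hp := hpark b.length hn1 le_rfl
      have hle := List.length_filter_le (fun z => z ≤ b.length) b
      have heq : b.filter (fun z => z ≤ b.length) = b :=
        (List.filter_sublist (l := b)).eq_of_length (by omega)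
      have : x ∈ b.filter (fun z => z ≤ b.length) := by rw [heq]; exact hx
      have := List.of_mem_filter this
      simp only [decide_eq_true_eq] at this
      omega
    have hp := hpark (x - 1) (by omega) hxlen
    have hcongr : b.countP (· < x) = b.countP (fun z => z ≤ x - 1) :=
      List.countP_congr (fun z _ => by
        simp only [decide_eq_true_eq]; omega)
    rw [← List.countP_eq_length_filter] at hp
    omega

lemma lex_of_forall₂ : ∀ {b a : List ℕ}, List.Forall₂ (· ≤ ·) b a →
    b = a ∨ List.Lex (· < ·) b a := by
  intro b a h
  induction h with
  | nil => exact Or.inl rfl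
  | @cons x y l₁ l₂ hxy _ ih =>
    rcases lt_or_eq_of_le hxy with hlt | rfl
    · exact Or.inr (List.Lex.rel hlt)
    · rcases ih with rfl | hlex
      · exact Or.inl rfl
      · exact Or.inr (List.Lex.cons hlex)

/-- For every packed word `u` of length `n`, the set of parking functions `a` of length
`n` with `pack a = u` is nonempty — it contains `u` itself — and possesses a greatest
element for the lexicographic order (the maximal unpacking `detass u` of `u`). -/
theorem exists_max_unpacking (u : List ℕ) (hu : pack u = u) :
    (IsParkingFun u ∧ pack u = u) ∧
    ∃ a : List ℕ,
      (IsParkingFun a ∧ a.length = u.length ∧ pack a = u) ∧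
      ∀ b : List ℕ, IsParkingFun b → b.length = u.length → pack b = u →
        b = a ∨ List.Lex (· < ·) b a := by
  have hrank : ∀ x ∈ u, rank u x = x := by
    intro x hx
    have h1 : u.map (rank u) = u.map id := by simpa [pack] using hu
    simpa using List.map_eq_map_iff.1 h1 x hx
  have hupos : ∀ x ∈ u, 0 < x := by
    intro x hx
    rw [← hrank x hx, rank]
    omega
  have hubound : ∀ x ∈ u, x ≤ u.countP (· < x) + 1 := by
    intro x hx
    have h1 := (hrank x hx).symm
    rw [rank] at h1
    have h2 : (u.filter (· < x)).dedup.length ≤ (u.filter (· < x)).length :=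
      (List.dedup_sublist _).length_le
    rw [List.countP_eq_length_filter]
    omega
  have hu_park : IsParkingFun u := parking_of_bound u hupos hubound
  refine ⟨⟨hu_park, hu⟩, ?_⟩
  set F : ℕ → ℕ := fun j => u.countP (· < j) + 1 with hF
  have hFlt : ∀ (x : ℕ), ∀ y ∈ u, (F y < F x ↔ y < x) := by
    intro x y hy
    constructor
    · intro h
      by_contra hc
      push_neg at hc
      have : u.countP (· < x) ≤ u.countP (· < y) :=
        List.countP_mono_left (fun z _ hz => by
          simp only [decide_eq_true_eq] at hz ⊢; omega)
      simp only [hF] at h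
      omega
    · intro h
      simp only [hF]
      have := countP_lt_countP u hy h
      omega
  refine ⟨u.map F, ⟨?_, by simp, ?_⟩, ?_⟩
  · -- a is a parking function
    apply parking_of_bound
    · intro x hx
      obtain ⟨y, hy, rfl⟩ := List.mem_map.1 hx
      simp only [hF]
      omega
    · intro x hx
      obtain ⟨y, hy, rfl⟩ := List.mem_map.1 hx
      have : (u.map F).countP (· < F y) = u.countP (· < y) := by
        rw [List.countP_map]
        exact List.countP_congr (fun z hz => by
          simp only [Function.comp, decide_eq_true_eq]
          exact hFlt y z hz)
      rw [this]
  · -- pack (u.map F) = u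
    rw [pack, List.map_map]
    have hgoal : u.map (rank (u.map F) ∘ F) = u.map id := by
      apply List.map_eq_map_iff.2
      intro x hx
      simp only [Function.comp_apply, id_eq]
      have hinj : Set.InjOn F ↑(u.toFinset.filter (· < x)) := by
        intro y hy z hz hyz
        simp only [Finset.coe_filter, Set.mem_setOf_eq, List.mem_toFinset] at hy hz
        rcases lt_trichotomy y z with h | h | h
        · have := (hFlt z y hy.1).2 h; omega
        · exact h
        · have := (hFlt y z hz.1).2 h; omega
      have h1 : (u.map F).toFinset = u.toFinset.image F := by ext y; simp
      rw [rank_eq_card, h1, Finset.filter_image]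
      have h2 : u.toFinset.filter (fun a => F a < F x) = u.toFinset.filter (· < x) := by
        apply Finset.filter_congr
        intro y hy
        simp only [List.mem_toFinset] at hy
        simp [hFlt x y hy]
      rw [h2, Finset.card_image_of_injOn hinj, ← rank_eq_card]
      exact hrank x hx
    rw [hgoal, List.map_id]
  · -- maximality
    intro b hbp hblen hbpack
    have hmapb : b.map (rank b) = u := hbpack
    have key : ∀ x ∈ b, x ≤ F (rank b x) := by
      intro x hx
      have h1 := bound_of_parking b hbp x hx
      have h2 : u.countP (· < rank b x) = b.countP (· < x) := by
        rw [← hmapb, List.countP_map]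
        exact List.countP_congr (fun z hz => by
          simp only [Function.comp, decide_eq_true_eq]
          exact rank_lt_iff b hz)
      simp only [hF]
      omega
    have hfa : List.Forall₂ (· ≤ ·) b (u.map F) := by
      rw [← hmapb, List.map_map]
      rw [List.forall₂_map_right_iff]
      exact List.forall₂_same.2 (fun x hx => key x hx)
    exact lex_of_forall₂ hfa
end
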